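/- Let A and B be groups with rk A = rk B = n < ∞, and suppose every abelian subgroup of B is finitely generated. Let η : A → B be an injective group homomorphism, and let a ∈ A be an element contained in a free abelian subgroup of A of rank n. Then rk Z(Z_B(η(a))) ≤ rk Z(Z_A(a)), where Z_G(g) denotes the centralizer of g in G and Z(H) the center of H. -/

import Mathlib

/-- `rk D`: the supremum of the ranks of finitely generated abelian subgroups of
`D`, i.e. the supremum of all `n` such that free abelian of rank `n` embeds. -/
noncomputable def rk (D : Type*) [Group D] : ℕ∞ :=
  ⨆ (n : ℕ) (_ : ∃ φ : Multiplicative (Fin n → ℤ) →* D, Function.Injective φ),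
    (n : ℕ∞)

lemma rk_le_rk {X Y : Type*} [Group X] [Group Y]
    (h : ∀ k : ℕ, (∃ f : Multiplicative (Fin k → ℤ) →* X, Function.Injective f) →
      (∃ g : Multiplicative (Fin k → ℤ) →* Y, Function.Injective g)) :
    rk X ≤ rk Y := by
  refine iSup₂_le fun k hk => ?_
  exact le_iSup₂ (f := fun (k : ℕ)
    (_ : ∃ g : Multiplicative (Fin k → ℤ) →* Y, Function.Injective g) => (k : ℕ∞)) k (h k hk)

lemma no_inj {Y : Type*} [Group Y] {n : ℕ} (hY : rk Y = (n : ℕ∞)) :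
    ¬ ∃ f : Multiplicative (Fin (n+1) → ℤ) →* Y, Function.Injective f := by
  intro h
  have : ((n+1 : ℕ) : ℕ∞) ≤ rk Y := le_iSup₂ (f := fun (k : ℕ)
    (_ : ∃ g : Multiplicative (Fin k → ℤ) →* Y, Function.Injective g) => (k : ℕ∞)) (n+1) h
  rw [hY] at this
  exact absurd (Nat.cast_le.mp this) (by omega)

lemma exists_pow_mem {G : Type*} [Group G] {n : ℕ}
    (hn : ¬ ∃ f : Multiplicative (Fin (n+1) → ℤ) →* G, Function.Injective f)
    (ρ : Multiplicative (Fin n → ℤ) →* G) (hρ : Function.Injective ρ)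
    (c : G) (hc : ∀ w, Commute c (ρ w)) :
    ∃ m : ℕ, 0 < m ∧ c ^ m ∈ ρ.range := by
  by_contra hno
  push_neg at hno
  have hzpow : ∀ t : ℤ, t ≠ 0 → c ^ t ∉ ρ.range := by
    intro t ht hmem
    rcases lt_or_gt_of_ne ht with h | h
    · have : c ^ (-t).toNat ∈ ρ.range := by
        have : c ^ (-t) ∈ ρ.range := by
          rw [zpow_neg]; exact ρ.range.inv_mem hmem
        rwa [← Int.toNat_of_nonneg (by omega : (0:ℤ) ≤ -t), zpow_natCast] at this
      exact hno _ (by omega) this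
    · have : c ^ t.toNat ∈ ρ.range := by
        rwa [← Int.toNat_of_nonneg (by omega : (0:ℤ) ≤ t), zpow_natCast] at hmem
      exact hno _ (by omega) this
  set F : Multiplicative (Fin (n+1) → ℤ) → G := fun v => ρ (Multiplicative.ofAdd
      fun i : Fin n => v.toAdd i.castSucc) * c ^ (v.toAdd (Fin.last n)) with hF
  have key : ∀ u v, F (u * v) = F u * F v := by
    simp only [hF]
    intro u v
    have h1 : (Multiplicative.ofAdd fun i : Fin n => (u*v).toAdd i.castSucc)
        = (Multiplicative.ofAdd fun i : Fin n => u.toAdd i.castSucc)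
          * (Multiplicative.ofAdd fun i : Fin n => v.toAdd i.castSucc) := rfl
    simp only [h1, map_mul]
    have h2 : Commute (c ^ (u.toAdd (Fin.last n)))
        (ρ (Multiplicative.ofAdd fun i : Fin n => v.toAdd i.castSucc)) :=
      (hc _).zpow_left _
    have h3 : (u*v).toAdd (Fin.last n) = u.toAdd (Fin.last n) + v.toAdd (Fin.last n) := rfl
    rw [h3, zpow_add]
    rw [mul_assoc, mul_assoc, ← mul_assoc (c ^ (u.toAdd (Fin.last n))), h2.eq, mul_assoc]
  refine hn ⟨MonoidHom.mk' F key, ?_⟩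
  · rw [injective_iff_map_eq_one]
    intro v hv
    set u : Multiplicative (Fin n → ℤ) :=
      Multiplicative.ofAdd (fun i : Fin n => v.toAdd i.castSucc) with hu
    have hv' : ρ u * c ^ (v.toAdd (Fin.last n)) = 1 := hv
    have hlast : v.toAdd (Fin.last n) = 0 := by
      by_contra ht
      refine hzpow _ ht ⟨u⁻¹, ?_⟩
      rw [map_inv, eq_inv_of_mul_eq_one_left (a := ρ u) hv', inv_inv]
    have hu1 : ρ u = 1 := by
      rw [hlast, zpow_zero, mul_one] at hv'; exact hv'
    have hu0 : u = 1 := hρ (by rw [hu1, map_one])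
    have : ∀ i : Fin (n+1), v.toAdd i = 0 := by
      intro i
      induction i using Fin.lastCases with
      | last => exact hlast
      | cast i =>
          have := congrFun (congrArg Multiplicative.toAdd hu0) i
          simpa [hu] using this
    have : v.toAdd = 0 := funext this
    have := congrArg Multiplicative.ofAdd this
    simpa using this

lemma decomp {M : Type*} [CommGroup M] {k : ℕ} (f : Multiplicative (Fin k → ℤ) →* M)
    (v : Fin k → ℤ) :
    f (Multiplicative.ofAdd v) = ∏ i, f (Multiplicative.ofAdd (Pi.single i 1)) ^ (v i) := by
  have h1 : Multiplicative.ofAdd v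
      = ∏ i, Multiplicative.ofAdd (Pi.single i (1:ℤ)) ^ (v i) := by
    calc Multiplicative.ofAdd v
        = Multiplicative.ofAdd (∑ i, Pi.single i (v i)) := by
          rw [Finset.univ_sum_single v]
      _ = ∏ i, Multiplicative.ofAdd (Pi.single i (v i)) := ofAdd_sum _ _
      _ = ∏ i, Multiplicative.ofAdd (Pi.single i (1:ℤ)) ^ (v i) := by
          refine Finset.prod_congr rfl fun i _ => ?_
          rw [← ofAdd_zsmul]
          congr 1
          rw [← Pi.single_smul, smul_eq_mul, mul_one]
  rw [h1, map_prod]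
  exact Finset.prod_congr rfl fun i _ => map_zpow f _ _

/-- Irmak's lemma: if `rk A = rk B = n`, every abelian subgroup of `B` is finitely
generated, `η : A → B` is injective and `a` lies in a free abelian subgroup of `A`
of rank `n`, then `rk Z(Z_B(η a)) ≤ rk Z(Z_A(a))`. -/
theorem rk_center_centralizer_le (A B : Type*) [Group A] [Group B] (n : ℕ)
    (hA : rk A = (n : ℕ∞)) (hB : rk B = (n : ℕ∞))
    (hBab : ∀ H : Subgroup B, (∀ x ∈ H, ∀ y ∈ H, x * y = y * x) → Group.FG H)
    (η : A →* B) (hη : Function.Injective η) (a : A)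
    (ha : ∃ φ : Multiplicative (Fin n → ℤ) →* A,
      Function.Injective φ ∧ a ∈ φ.range) :
    rk (Subgroup.center (Subgroup.centralizer ({η a} : Set B))) ≤
      rk (Subgroup.center (Subgroup.centralizer ({a} : Set A))) := by
  obtain ⟨φ, hφ, w0, hw0⟩ := ha
  set ρ : Multiplicative (Fin n → ℤ) →* B := η.comp φ with hρdef
  have hρ : Function.Injective ρ := hη.comp hφ
  set Zc : Subgroup B := Subgroup.centralizer ({η a} : Set B) with hZc
  have hmemc : ∀ w, ρ w ∈ Zc := by
    intro w
    rw [hZc, Subgroup.mem_centralizer_iff]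
    intro h hh
    rw [Set.mem_singleton_iff] at hh
    subst hh
    have : η a = ρ w0 := by rw [hρdef]; simp [← hw0]
    rw [this, ← map_mul, ← map_mul, mul_comm]
  apply rk_le_rk
  rintro k ⟨ψ, hψ⟩
  set e : ↥(Subgroup.center ↥Zc) →* B :=
    Zc.subtype.comp (Subgroup.center ↥Zc).subtype with he
  have heinj : Function.Injective e :=
    Subtype.val_injective.comp Subtype.val_injective
  set β : Multiplicative (Fin k → ℤ) →* B := e.comp ψ with hβ
  have hβinj : Function.Injective β := heinj.comp hψ
  have hcent : ∀ (c : ↥(Subgroup.center ↥Zc)) (y : B), y ∈ Zc → Commute (e c) y := by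
    intro c y hy
    have h1 := Subgroup.mem_center_iff.mp c.2 ⟨y, hy⟩
    have := congrArg (Subtype.val) h1
    exact (this).symm
  have H : ∀ i : Fin k, ∃ m : ℕ, 0 < m ∧
      (β (Multiplicative.ofAdd (Pi.single i 1))) ^ m ∈ ρ.range := by
    intro i
    exact exists_pow_mem (no_inj hB) ρ hρ _ (fun w => hcent _ _ (hmemc w))
  choose ms hpos hmem using H
  set m : ℕ := ∏ i, ms i with hm
  have hmpos : 0 < m := Finset.prod_pos fun i _ => hpos i
  have hpow : ∀ v : Multiplicative (Fin k → ℤ), (β v) ^ m ∈ ρ.range := by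
    intro v
    open scoped IsMulCommutative in
    have hd := decomp (M := ↥(Subgroup.center ↥Zc)) ψ (Multiplicative.toAdd v)
    rw [ofAdd_toAdd] at hd
    have h4 : (ψ v) ^ m = ∏ i, (ψ (Multiplicative.ofAdd (Pi.single i 1)))
        ^ ((Multiplicative.toAdd v i) * (m : ℤ)) := by
      rw [hd, ← Finset.prod_pow]
      refine Finset.prod_congr rfl fun i _ => ?_
      rw [← zpow_natCast (_ ^ (Multiplicative.toAdd v i)) m, ← zpow_mul]
    have h5 : (β v) ^ m = e ((ψ v) ^ m) := by rw [hβ]; simp [map_pow]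
    have h7 : (ψ v) ^ m ∈ Subgroup.comap e ρ.range := by
      rw [h4]
      refine Subgroup.prod_mem _ fun i _ => ?_
      rw [Subgroup.mem_comap, map_zpow]
      obtain ⟨t, ht⟩ := Finset.dvd_prod_of_mem ms (Finset.mem_univ i)
      have h6 : (Multiplicative.toAdd v i) * (m : ℤ)
          = (ms i : ℤ) * (Multiplicative.toAdd v i * t) := by
        have hmt : m = ms i * t := ht
        push_cast [hmt]
        ring
      rw [h6, zpow_mul, zpow_natCast]
      exact Subgroup.zpow_mem _ (hmem i) _
    rw [h5]
    exact Subgroup.mem_comap.mp h7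
  choose gw hgw using fun v => MonoidHom.mem_range.mp (hpow v)
  set fA : Multiplicative (Fin k → ℤ) → A := fun v => φ (gw v) with hfA
  have hηf : ∀ v, η (fA v) = (β v) ^ m := fun v => hgw v
  have amem : a ∈ Subgroup.centralizer ({a} : Set A) := by
    rw [Subgroup.mem_centralizer_iff]
    intro h hh
    rw [Set.mem_singleton_iff] at hh
    rw [hh]
  have hfcomm : ∀ v, ∀ x ∈ Subgroup.centralizer ({a} : Set A),
      x * fA v = fA v * x := by
    intro v x hx
    have hx' : η x ∈ Zc := by
      rw [hZc, Subgroup.mem_centralizer_iff]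
      intro h hh
      rw [Set.mem_singleton_iff] at hh
      subst hh
      rw [Subgroup.mem_centralizer_iff] at hx
      have := hx a (Set.mem_singleton a)
      rw [← map_mul, this, map_mul]
    have h1 : Commute (e (ψ v)) (η x) := hcent (ψ v) _ hx'
    have h2 : Commute ((β v) ^ m) (η x) := h1.pow_left m
    apply hη
    rw [map_mul, map_mul, hηf v]
    exact h2.symm.eq
  have hfmem : ∀ v, fA v ∈ Subgroup.centralizer ({a} : Set A) := by
    intro v
    rw [Subgroup.mem_centralizer_iff]
    intro h hh
    rw [Set.mem_singleton_iff] at hh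
    rw [hh]
    exact hfcomm v a amem
  have hfcen : ∀ v, (⟨fA v, hfmem v⟩ : ↥(Subgroup.centralizer ({a} : Set A)))
      ∈ Subgroup.center ↥(Subgroup.centralizer ({a} : Set A)) := by
    intro v
    rw [Subgroup.mem_center_iff]
    intro y
    exact Subtype.ext (hfcomm v y.1 y.2)
  set χf : Multiplicative (Fin k → ℤ) →
      ↥(Subgroup.center ↥(Subgroup.centralizer ({a} : Set A))) :=
    fun v => ⟨⟨fA v, hfmem v⟩, hfcen v⟩ with hχf
  have hfmul : ∀ u v, fA (u * v) = fA u * fA v := by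
    intro u v
    apply hη
    rw [map_mul, hηf, hηf, hηf, map_mul]
    have hco : Commute (β u) (β v) := hcent (ψ u) _ (ψ v).1.2
    exact hco.mul_pow m
  have hχmul : ∀ u v, χf (u * v) = χf u * χf v := by
    intro u v
    exact Subtype.ext (Subtype.ext (hfmul u v))
  refine ⟨MonoidHom.mk' χf hχmul, ?_⟩
  rw [injective_iff_map_eq_one]
  intro v hv
  have h7 : fA v = 1 := congrArg (fun x => x.1.1) hv
  have h8 : (β v) ^ m = 1 := by rw [← hηf v, h7, map_one]
  have h9 : v ^ m = 1 := hβinj (by rw [map_pow, h8, map_one])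
  have h10 : m • Multiplicative.toAdd v = 0 := by
    rw [← toAdd_pow, h9]
    rfl
  have h11 : Multiplicative.toAdd v = 0 := by
    funext i
    have := congrFun h10 i
    simp only [Pi.smul_apply, smul_eq_mul, Pi.zero_apply] at this ⊢
    have hm' : (m : ℤ) ≠ 0 := by exact_mod_cast hmpos.ne'
    exact by
      have : (m : ℤ) * Multiplicative.toAdd v i = 0 := by exact_mod_cast this
      exact (mul_eq_zero.mp this).resolve_left hm'
  have := congrArg Multiplicative.ofAdd h11
  simpa using this
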